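/- Let n = lcm(n_1,…,n_l) and suppose c_1,…,c_l are integers with ∑_i c_i·(n/n_i) = 1. If u_i·u_j⁻¹ is a gcd(n_i,n_j)-th power of a positive rational for all i ≠ j, then x₀ = ∏_{i=1}^{l} u_i^{−c_i·n/n_i} satisfies: u_i·x₀ is an n_i-th power of a positive rational, for every i. -/

import Mathlib

lemma prod_zpow_eq_zpow_sum {α : Type*} (a : ℚ) (ha : a ≠ 0) (s : Finset α) (f : α → ℤ) :
    ∏ i ∈ s, a ^ f i = a ^ (∑ i ∈ s, f i) := by
  classical
  induction s using Finset.induction with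
  | empty => simp
  | insert b t hx ih => rw [Finset.prod_insert hx, Finset.sum_insert hx, ih, zpow_add₀ ha]

theorem stmt_6 (l : ℕ) (u : Fin l → ℚ) (hu : ∀ i, 0 < u i)
    (m : Fin l → ℕ) (hm : ∀ i, 0 < m i)
    (n : ℕ) (hn : n = Finset.univ.lcm m)
    (c : Fin l → ℤ) (hc : ∑ i, c i * ((n : ℤ) / (m i : ℤ)) = 1)
    (h : ∀ i j, i ≠ j → ∃ y : ℚ, 0 < y ∧ u i * (u j)⁻¹ = y ^ Nat.gcd (m i) (m j))
    (x₀ : ℚ) (hx₀ : x₀ = ∏ i, (u i) ^ (-(c i * ((n : ℤ) / (m i : ℤ))))) :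
    ∀ i, ∃ y : ℚ, 0 < y ∧ u i * x₀ = y ^ m i := by
  intro i
  have hy : ∀ j, ∃ y : ℚ, 0 < y ∧ u i * (u j)⁻¹ = y ^ Nat.gcd (m i) (m j) := by
    intro j
    by_cases hij : i = j
    · subst hij
      exact ⟨1, one_pos, by rw [mul_inv_cancel₀ (hu i).ne', one_pow]⟩
    · exact h i j hij
  choose y hypos hyeq using hy
  set d : Fin l → ℤ := fun j => (n : ℤ) / (m j : ℤ) with hd
  have hmn : ∀ j, (m j : ℤ) ∣ (n : ℤ) := fun j =>
    Int.natCast_dvd_natCast.mpr (hn ▸ Finset.dvd_lcm (Finset.mem_univ j))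
  have hdm : ∀ j, d j * (m j : ℤ) = (n : ℤ) := fun j => Int.ediv_mul_cancel (hmn j)
  have hdvd : ∀ j, ∃ k : ℤ, (Nat.gcd (m i) (m j) : ℤ) * d j = (m i : ℤ) * k := by
    intro j
    have h1 : (Nat.lcm (m i) (m j) : ℤ) ∣ (n : ℤ) := Int.natCast_dvd_natCast.mpr
      (hn ▸ Nat.lcm_dvd (Finset.dvd_lcm (Finset.mem_univ i)) (Finset.dvd_lcm (Finset.mem_univ j)))
    have h2 : (m i : ℤ) * (m j : ℤ) ∣ (Nat.gcd (m i) (m j) : ℤ) * (n : ℤ) := by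
      have hgl : (m i : ℤ) * (m j : ℤ) = (Nat.gcd (m i) (m j) : ℤ) * (Nat.lcm (m i) (m j) : ℤ) := by
        exact_mod_cast congrArg (Nat.cast : ℕ → ℤ) (Nat.gcd_mul_lcm (m i) (m j)).symm
      rw [hgl]
      exact mul_dvd_mul_left _ h1
    have h3 : (m i : ℤ) * (m j : ℤ) ∣ ((Nat.gcd (m i) (m j) : ℤ) * d j) * (m j : ℤ) := by
      rw [mul_assoc, hdm j]; exact h2
    have hmj : (m j : ℤ) ≠ 0 := by exact_mod_cast (hm j).ne'
    exact (mul_dvd_mul_iff_right hmj).mp h3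
  choose k hk using hdvd
  refine ⟨∏ j, y j ^ (c j * k j), Finset.prod_pos (fun j _ => zpow_pos (hypos j) _), ?_⟩
  have hune : ∀ j, u j ≠ 0 := fun j => (hu j).ne'
  have key : u i * x₀ = ∏ j, (y j) ^ ((Nat.gcd (m i) (m j) : ℤ) * (c j * d j)) := by
    rw [hx₀]
    have hui : u i = ∏ j, u i ^ (c j * d j) := by
      rw [prod_zpow_eq_zpow_sum _ (hune i), hc, zpow_one]
    calc u i * ∏ j, u j ^ (-(c j * d j))
        = ∏ j, (u i ^ (c j * d j) * u j ^ (-(c j * d j))) := by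
          rw [Finset.prod_mul_distrib, ← hui]
      _ = ∏ j, (u i * (u j)⁻¹) ^ (c j * d j) := by
          refine Finset.prod_congr rfl fun j _ => ?_
          rw [mul_zpow, zpow_neg, ← inv_zpow]
      _ = ∏ j, (y j) ^ ((Nat.gcd (m i) (m j) : ℤ) * (c j * d j)) := by
          refine Finset.prod_congr rfl fun j _ => ?_
          rw [hyeq j, ← zpow_natCast, ← zpow_mul]
  rw [key]
  have : ∀ j, (y j) ^ ((Nat.gcd (m i) (m j) : ℤ) * (c j * d j))
      = (y j ^ (c j * k j)) ^ (m i : ℕ) := by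
    intro j
    rw [← zpow_natCast (y j ^ (c j * k j)), ← zpow_mul]
    congr 1
    have : (Nat.gcd (m i) (m j) : ℤ) * (c j * d j) = c j * ((Nat.gcd (m i) (m j) : ℤ) * d j) := by
      ring
    rw [this, hk j]
    ring
  rw [Finset.prod_congr rfl (fun j _ => this j), ← Finset.prod_pow]
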